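/- Let X be a quasi-median graph whose crossing graph ΔX admits a graph factor system. Then there is a uniform bound on the size of any collection of pairwise-crossing hyperplanes of X; consequently every prism (product of maximal cliques) of X has uniformly bounded diameter. -/

import Mathlib

variable {V : Type*}

/-- Two edges (with endpoints in `S`) are two sides of a triangle. -/
def TriSides (G : SimpleGraph V) (S : Set V) (e f : Sym2 V) : Prop :=
  ∃ a b c, a ∈ S ∧ b ∈ S ∧ c ∈ S ∧ e = s(a, b) ∧ f = s(a, c) ∧
    G.Adj a b ∧ G.Adj a c ∧ G.Adj b c

/-- Two edges (with endpoints in `S`) are opposite sides of an induced square. -/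
def SquareOpp (G : SimpleGraph V) (S : Set V) (e f : Sym2 V) : Prop :=
  ∃ a b c d, a ∈ S ∧ b ∈ S ∧ c ∈ S ∧ d ∈ S ∧ e = s(a, b) ∧ f = s(c, d) ∧
    G.Adj a b ∧ G.Adj c d ∧ G.Adj a c ∧ G.Adj b d ∧
    ¬ G.Adj a d ∧ ¬ G.Adj b c ∧ a ≠ d ∧ b ≠ c

/-- Parallelism of edges: the equivalence relation generated by being two sides of a
triangle or opposite sides of an induced square.  Hyperplanes are its classes. -/
def Parallel (G : SimpleGraph V) (S : Set V) : Sym2 V → Sym2 V → Prop :=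
  Relation.EqvGen (fun e f => TriSides G S e f ∨ SquareOpp G S e f)

/-- Two edges form a corner of an induced square. -/
def SquareCorner (G : SimpleGraph V) (S : Set V) (e f : Sym2 V) : Prop :=
  ∃ a b c d, a ∈ S ∧ b ∈ S ∧ c ∈ S ∧ d ∈ S ∧ e = s(a, b) ∧ f = s(a, c) ∧
    G.Adj a b ∧ G.Adj a c ∧ G.Adj b d ∧ G.Adj c d ∧ ¬ G.Adj a d ∧ ¬ G.Adj b c

/-- The hyperplanes dual to `e` and to `f` cross: some representatives of their
parallelism classes form a corner of an induced square. -/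
def Crosses (G : SimpleGraph V) (S : Set V) (e f : Sym2 V) : Prop :=
  ∃ e' f', Parallel G S e e' ∧ Parallel G S f f' ∧ SquareCorner G S e' f'

/-- `(y₁,y₂,y₃)` satisfies the conditions of a `k`-quasi-median of `(x₁,x₂,x₃)`,
except minimality of `k`: `yᵢ, yⱼ` lie on a common geodesic from `xᵢ` to `xⱼ` and
all pairwise distances equal `k`. -/
def IsQMTriple (G : SimpleGraph V) (x₁ x₂ x₃ y₁ y₂ y₃ : V) (k : ℕ) : Prop :=
  G.dist x₁ y₁ + G.dist y₁ y₂ + G.dist y₂ x₂ = G.dist x₁ x₂ ∧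
  G.dist x₁ y₁ + G.dist y₁ y₃ + G.dist y₃ x₃ = G.dist x₁ x₃ ∧
  G.dist x₂ y₂ + G.dist y₂ y₃ + G.dist y₃ x₃ = G.dist x₂ x₃ ∧
  G.dist y₁ y₂ = k ∧ G.dist y₁ y₃ = k ∧ G.dist y₂ y₃ = k

/-- A quasi-median of a triple: a `k`-quasi-median with `k` minimal. -/
def IsQuasiMedianTriple (G : SimpleGraph V) (x₁ x₂ x₃ y₁ y₂ y₃ : V) : Prop :=
  ∃ k, IsQMTriple G x₁ x₂ x₃ y₁ y₂ y₃ k ∧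
    ∀ k' z₁ z₂ z₃, IsQMTriple G x₁ x₂ x₃ z₁ z₂ z₃ k' → k ≤ k'

/-- A geodesically convex set of vertices. -/
def GraphConvex (G : SimpleGraph V) (S : Set V) : Prop :=
  ∀ x ∈ S, ∀ y ∈ S, ∀ z, G.dist x z + G.dist z y = G.dist x y → z ∈ S

/-- The convex hull of a set of vertices. -/
def graphConvexHull (G : SimpleGraph V) (S : Set V) : Set V :=
  ⋂₀ {T | S ⊆ T ∧ GraphConvex G T}

/-- A `3`-cube in `G`: an injective map from the vertices of the combinatorial
`3`-cube, with adjacency exactly at Hamming distance `1`. -/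
def IsThreeCube (G : SimpleGraph V) (g : Fin 2 × Fin 2 × Fin 2 → V) : Prop :=
  Function.Injective g ∧ ∀ u v, G.Adj (g u) (g v) ↔
    ((if u.1 = v.1 then 0 else 1) + (if u.2.1 = v.2.1 then 0 else 1) +
      (if u.2.2 = v.2.2 then 0 else 1) = (1 : ℕ))

/-- `G` is a quasi-median graph: every triple has a unique quasi-median, `G` has no
induced `K₄⁻`, and every isometrically embedded `6`-cycle has a `3`-cube as its
convex hull. -/
def IsQuasiMedian (G : SimpleGraph V) : Prop :=
  (∀ x₁ x₂ x₃ : V, ∃ y₁ y₂ y₃ : V, IsQuasiMedianTriple G x₁ x₂ x₃ y₁ y₂ y₃ ∧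
    ∀ z₁ z₂ z₃, IsQuasiMedianTriple G x₁ x₂ x₃ z₁ z₂ z₃ →
      z₁ = y₁ ∧ z₂ = y₂ ∧ z₃ = y₃) ∧
  (¬ ∃ a b c d : V, G.Adj a b ∧ G.Adj a c ∧ G.Adj a d ∧ G.Adj b c ∧ G.Adj b d ∧
    ¬ G.Adj c d ∧ c ≠ d) ∧
  (∀ f : Fin 6 → V,
    (∀ i j : Fin 6, G.dist (f i) (f j) =
      min (((i.val : ℤ) - (j.val : ℤ)).natAbs) (6 - ((i.val : ℤ) - (j.val : ℤ)).natAbs)) →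
    ∃ g : Fin 2 × Fin 2 × Fin 2 → V, IsThreeCube G g ∧
      graphConvexHull G (Set.range f) = Set.range g)

/-- A graph factor system on a graph `G` (with vertex set `X`). -/
def IsGraphFactorSystem (G : SimpleGraph V) (X : Set V) (𝔉 : Set (Set V)) : Prop :=
  X ∈ 𝔉 ∧
  (∀ F ∈ 𝔉, F ⊆ X) ∧
  (∀ v ∈ X, ({u ∈ X | G.Adj v u}).Nonempty → {u ∈ X | G.Adj v u} ∈ 𝔉) ∧
  (∀ A ∈ 𝔉, ∀ B ∈ 𝔉, (A ∩ B).Nonempty → A ∩ B ∈ 𝔉) ∧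
  ∃ n : ℕ, 0 < n ∧ ∀ (k : ℕ) (c : Fin k → Set V),
    StrictMono c → (∀ i, c i ∈ 𝔉) → k < n

lemma SquareCorner.symm {G : SimpleGraph V} {S : Set V} {e f : Sym2 V}
    (h : SquareCorner G S e f) : SquareCorner G S f e := by
  obtain ⟨a, b, c, d, ha, hb, hc, hd, he, hf, h1, h2, h3, h4, h5, h6⟩ := h
  exact ⟨a, c, b, d, ha, hc, hb, hd, hf, he, h2, h1, h4, h3, h5, fun h => h6 h.symm⟩

/-- Parallelism as a setoid on the edges of `G`. -/
def parallelSetoid (G : SimpleGraph V) : Setoid G.edgeSet :=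
  ⟨fun e f => Parallel G Set.univ e.1 f.1,
    ⟨fun _ => Relation.EqvGen.refl _, Relation.EqvGen.symm _ _,
      fun h h' => Relation.EqvGen.trans _ _ _ h h'⟩⟩

/-- The hyperplanes of `G`: parallelism classes of edges. -/
def Hyp (G : SimpleGraph V) := Quotient (parallelSetoid G)

/-- The crossing graph `ΔG`: vertices are hyperplanes, adjacent when they cross. -/
def crossingGraph (G : SimpleGraph V) : SimpleGraph (Hyp G) where
  Adj K K' := K ≠ K' ∧ ∃ e f : G.edgeSet,
    Quotient.mk (parallelSetoid G) e = K ∧ Quotient.mk (parallelSetoid G) f = K' ∧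
    SquareCorner G Set.univ e.1 f.1
  symm := ⟨fun K K' ⟨hne, e, f, he, hf, hsq⟩ => ⟨hne.symm, f, e, hf, he, hsq.symm⟩⟩
  loopless := ⟨fun K h => h.1 rfl⟩

/-- A prism of `G`: the image of a product of maximal cliques, with adjacency exactly
at Hamming distance `1`. -/
def IsPrism (G : SimpleGraph V) (P : Set V) : Prop :=
  ∃ (k : ℕ) (S : Fin k → Set V) (φ : (∀ i, S i) → V),
    (∀ i, G.IsClique (S i)) ∧
    (∀ i, ∀ t : Set V, G.IsClique t → S i ⊆ t → t = S i) ∧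
    Function.Injective φ ∧ Set.range φ = P ∧
    ∀ f g : ∀ i, S i, f ≠ g →
      (G.Adj (φ f) (φ g) ↔ ∃! i : Fin k, (f i : V) ≠ (g i : V))

namespace QmProof

open SimpleGraph

variable {V : Type*} {G : SimpleGraph V}

lemma dist0 (hqm : IsQuasiMedian G) {x z : V} (h : G.dist x z = 0) : x = z := by
  obtain ⟨y₁, y₂, y₃, hy, huniq⟩ := hqm.1 x x x
  have hzx : G.dist z x = 0 := by rwa [SimpleGraph.dist_comm]
  have h1 : IsQuasiMedianTriple G x x x x x x :=
    ⟨0, by simp [IsQMTriple, SimpleGraph.dist_self], fun _ _ _ _ _ => Nat.zero_le _⟩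
  have h2 : IsQuasiMedianTriple G x x x z z z :=
    ⟨0, by simp [IsQMTriple, SimpleGraph.dist_self, h, hzx], fun _ _ _ _ _ => Nat.zero_le _⟩
  have e1 := (huniq x x x h1).1
  have e2 := (huniq z z z h2).1
  exact e1.trans e2.symm

lemma reach (hqm : IsQuasiMedian G) (x z : V) : G.Reachable x z := by
  by_contra h
  have h0 : G.dist x z = 0 := SimpleGraph.dist_eq_zero_iff_eq_or_not_reachable.mpr (Or.inr h)
  exact h ((dist0 hqm h0) ▸ Reachable.refl x)

lemma conn (hqm : IsQuasiMedian G) (x : V) : G.Connected := by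
  have : Nonempty V := ⟨x⟩
  exact ⟨fun u v => reach hqm u v⟩

lemma dtri (hqm : IsQuasiMedian G) (u v w : V) :
    G.dist u w ≤ G.dist u v + G.dist v w :=
  (conn hqm u).dist_triangle

lemma adj_dist {x y : V} (h : G.Adj x y) : G.dist x y = 1 :=
  SimpleGraph.dist_eq_one_iff_adj.mpr h

lemma dist_adj {x y : V} (h : G.dist x y = 1) : G.Adj x y :=
  SimpleGraph.dist_eq_one_iff_adj.mp h

lemma dist_pos (hqm : IsQuasiMedian G) {x y : V} (h : x ≠ y) : 1 ≤ G.dist x y := by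
  rcases Nat.eq_zero_or_pos (G.dist x y) with h0 | h1
  · exact absurd (dist0 hqm h0) h
  · exact h1

lemma dist_two (hqm : IsQuasiMedian G) {x y m : V} (hne : x ≠ y) (hn : ¬ G.Adj x y)
    (h1 : G.Adj x m) (h2 : G.Adj m y) : G.dist x y = 2 := by
  have le := dtri hqm x m y
  rw [adj_dist h1, adj_dist h2] at le
  have h0 : G.dist x y ≠ 0 := fun hh => hne (dist0 hqm hh)
  have h1' : G.dist x y ≠ 1 := fun hh => hn (dist_adj hh)
  omega

/-- Triangle condition. -/
lemma tc (hqm : IsQuasiMedian G) {u v w : V} (hvw : G.Adj v w)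
    (hd : G.dist u v = G.dist u w) (hne : u ≠ v) :
    ∃ z, G.Adj z v ∧ G.Adj z w ∧ G.dist u z + 1 = G.dist u v := by
  obtain ⟨y₁, y₂, y₃, ⟨k, ⟨e1, e2, e3, d12, d13, d23⟩, -⟩, -⟩ := hqm.1 u v w
  have hvw1 : G.dist v w = 1 := adj_dist hvw
  have hd1 : 1 ≤ G.dist u v := dist_pos hqm hne
  rw [d23, hvw1] at e3
  rw [d12] at e1
  rw [d13] at e2
  by_cases hk : k = 0
  · subst hk
    exfalso
    have h12 : y₁ = y₂ := dist0 hqm d12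
    have h13 : y₁ = y₃ := dist0 hqm d13
    rcases (by omega : G.dist v y₂ = 0 ∨ G.dist y₃ w = 0) with h | h
    · have hv : y₂ = v := (dist0 hqm h).symm
      have hy1 : y₁ = v := h12.trans hv
      have hy3 : y₃ = v := h13.symm.trans hy1
      rw [hy1, hy3] at e2
      -- e2 : d u v + 0 + d v w = d u w
      omega
    · have hw : y₃ = w := dist0 hqm h
      have hy1 : y₁ = w := h13.trans hw
      have hy2 : y₂ = w := h12.symm.trans hy1
      rw [hy1, hy2] at e1
      have hwv : G.dist w v = 1 := by rw [SimpleGraph.dist_comm]; exact hvw1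
      -- e1 : d u w + 0 + d w v = d u v
      omega
  · have hk1 : k = 1 ∧ G.dist v y₂ = 0 ∧ G.dist y₃ w = 0 := by omega
    obtain ⟨hk1, h2, h3⟩ := hk1
    have hv : v = y₂ := dist0 hqm h2
    have hw : y₃ = w := dist0 hqm h3
    subst hk1
    rw [← hv] at e1 d12
    rw [hw] at e2 d13
    refine ⟨y₁, ?_, ?_, ?_⟩
    · exact dist_adj d12
    · exact dist_adj d13
    · rw [SimpleGraph.dist_self] at e1; omega

/-- Uniqueness of medians (two medians of a triple coincide). -/
lemma two_median (hqm : IsQuasiMedian G) {r₁ r₂ r₃ p q : V}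
    (hp1 : G.dist r₁ p + G.dist p r₂ = G.dist r₁ r₂)
    (hp2 : G.dist r₁ p + G.dist p r₃ = G.dist r₁ r₃)
    (hp3 : G.dist r₂ p + G.dist p r₃ = G.dist r₂ r₃)
    (hq1 : G.dist r₁ q + G.dist q r₂ = G.dist r₁ r₂)
    (hq2 : G.dist r₁ q + G.dist q r₃ = G.dist r₁ r₃)
    (hq3 : G.dist r₂ q + G.dist q r₃ = G.dist r₂ r₃) : p = q := by
  obtain ⟨y₁, y₂, y₃, -, huniq⟩ := hqm.1 r₁ r₂ r₃
  have Hp : IsQuasiMedianTriple G r₁ r₂ r₃ p p p :=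
    ⟨0, ⟨by simpa [SimpleGraph.dist_self] using hp1,
         by simpa [SimpleGraph.dist_self] using hp2,
         by simpa [SimpleGraph.dist_self] using hp3,
         SimpleGraph.dist_self, SimpleGraph.dist_self, SimpleGraph.dist_self⟩,
      fun _ _ _ _ _ => Nat.zero_le _⟩
  have Hq : IsQuasiMedianTriple G r₁ r₂ r₃ q q q :=
    ⟨0, ⟨by simpa [SimpleGraph.dist_self] using hq1,
         by simpa [SimpleGraph.dist_self] using hq2,
         by simpa [SimpleGraph.dist_self] using hq3,
         SimpleGraph.dist_self, SimpleGraph.dist_self, SimpleGraph.dist_self⟩,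
      fun _ _ _ _ _ => Nat.zero_le _⟩
  exact ((huniq p p p Hp).1).trans ((huniq q q q Hq).1).symm

/-- K₄⁻-freeness: two adjacent vertices with two common neighbours force those
neighbours adjacent. -/
lemma cn (hqm : IsQuasiMedian G) {a b c d : V} (hab : G.Adj a b) (hac : G.Adj a c)
    (had : G.Adj a d) (hbc : G.Adj b c) (hbd : G.Adj b d) (hne : c ≠ d) : G.Adj c d := by
  by_contra h
  exact hqm.2.1 ⟨a, b, c, d, hab, hac, had, hbc, hbd, h, hne⟩

end QmProof

namespace QmProof

open SimpleGraph

variable {V : Type*} {G : SimpleGraph V}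

/-- The unique maximal clique containing the edge `ab`. -/
def Kset (G : SimpleGraph V) (a b : V) : Set V :=
  {x | x = a ∨ x = b ∨ (G.Adj x a ∧ G.Adj x b)}

lemma Kset_comm (G : SimpleGraph V) (a b : V) : Kset G a b = Kset G b a := by
  ext x; unfold Kset; constructor <;> rintro (h | h | ⟨h1, h2⟩)
  exacts [Or.inr (Or.inl h), Or.inl h, Or.inr (Or.inr ⟨h2, h1⟩),
    Or.inr (Or.inl h), Or.inl h, Or.inr (Or.inr ⟨h2, h1⟩)]

lemma mem_Kset_left (G : SimpleGraph V) (a b : V) : a ∈ Kset G a b := Or.inl rfl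

lemma mem_Kset_right (G : SimpleGraph V) (a b : V) : b ∈ Kset G a b := Or.inr (Or.inl rfl)

lemma adj_mem_Kset {a b x : V} (h1 : G.Adj x a) (h2 : G.Adj x b) : x ∈ Kset G a b :=
  Or.inr (Or.inr ⟨h1, h2⟩)

lemma Kset_adj (hqm : IsQuasiMedian G) {a b : V} (hab : G.Adj a b) :
    ∀ x ∈ Kset G a b, ∀ y ∈ Kset G a b, x ≠ y → G.Adj x y := by
  rintro x (rfl | rfl | ⟨hxa, hxb⟩) y (rfl | rfl | ⟨hya, hyb⟩) hne
  · exact absurd rfl hne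
  · exact hab
  · exact hya.symm
  · exact hab.symm
  · exact absurd rfl hne
  · exact hyb.symm
  · exact hxa
  · exact hxb
  · exact cn hqm hab hxa.symm hya.symm hxb.symm hyb.symm hne

lemma Kset_closed (hqm : IsQuasiMedian G) {a b : V} (hab : G.Adj a b) {x g z : V}
    (hx : x ∈ Kset G a b) (hg : g ∈ Kset G a b) (hxg : x ≠ g)
    (hzx : G.Adj z x) (hzg : G.Adj z g) : z ∈ Kset G a b := by
  have key : ∀ c, c ∈ Kset G a b → z = c ∨ G.Adj z c := by
    intro c hc
    by_cases h1 : z = c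
    · exact Or.inl h1
    right
    by_cases h2 : c = x
    · exact h2 ▸ hzx
    by_cases h3 : c = g
    · exact h3 ▸ hzg
    have hcx : G.Adj x c := Kset_adj hqm hab x hx c hc (fun h => h2 h.symm)
    have hcg : G.Adj g c := Kset_adj hqm hab g hg c hc (fun h => h3 h.symm)
    have hxgadj : G.Adj x g := Kset_adj hqm hab x hx g hg hxg
    exact cn hqm hxgadj hzx.symm hcx hzg.symm hcg h1
  rcases key a (mem_Kset_left G a b) with h | h
  · exact h ▸ mem_Kset_left G a b
  rcases key b (mem_Kset_right G a b) with h' | h'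
  · exact h' ▸ mem_Kset_right G a b
  exact adj_mem_Kset h h'

/-- `g` is the gate of `v` in `K`. -/
def IsGate (G : SimpleGraph V) (K : Set V) (g v : V) : Prop :=
  g ∈ K ∧ ∀ x ∈ K, x ≠ g → G.dist v x = G.dist v g + 1

lemma IsGate.unique {K : Set V} {g g' v : V} (h1 : IsGate G K g v) (h2 : IsGate G K g' v) :
    g = g' := by
  by_contra hne
  have e1 := h1.2 g' h2.1 (fun h => hne h.symm)
  have e2 := h2.2 g h1.1 hne
  omega

lemma gate_exists (hqm : IsQuasiMedian G) {a b : V} (hab : G.Adj a b) (v : V) :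
    ∃ g, IsGate G (Kset G a b) g v := by
  classical
  have haM : G.dist v a ∈ {n | ∃ x ∈ Kset G a b, G.dist v x = n} :=
    ⟨a, mem_Kset_left G a b, rfl⟩
  obtain ⟨g, hg, hdg⟩ := Nat.sInf_mem (Set.nonempty_of_mem haM)
  refine ⟨g, hg, ?_⟩
  intro x hx hxg
  have hadj : G.Adj g x := Kset_adj hqm hab g hg x hx (fun h => hxg h.symm)
  have hle : G.dist v x ≤ G.dist v g + 1 := by
    have h1 := dtri hqm v g x
    rw [adj_dist hadj] at h1
    omega
  have hge : sInf {n | ∃ x ∈ Kset G a b, G.dist v x = n} ≤ G.dist v x :=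
    Nat.sInf_le ⟨x, hx, rfl⟩
  rcases Nat.lt_or_ge (G.dist v x) (G.dist v g + 1) with hlt | hge2
  · exfalso
    have heq : G.dist v x = G.dist v g := by omega
    have hm1 : 1 ≤ G.dist v g := by
      by_contra h0
      push_neg at h0
      have hvg : v = g := dist0 hqm (by omega)
      have hvx : v = x := dist0 hqm (by omega)
      exact hxg (hvx ▸ hvg)
    have hvg : v ≠ g := fun h => by rw [← h, SimpleGraph.dist_self] at hm1; omega
    obtain ⟨z, hzg, hzx, hz⟩ := tc hqm hadj (heq.symm) hvg
    have hzK : z ∈ Kset G a b := Kset_closed hqm hab hg hx (fun h => hxg h.symm) hzg hzx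
    have hzM : G.dist v z ∈ {n | ∃ x ∈ Kset G a b, G.dist v x = n} := ⟨z, hzK, rfl⟩
    have := Nat.sInf_le hzM
    omega
  · omega

lemma gate_self {a b : V} (hab : G.Adj a b) : IsGate G (Kset G a b) a a := by
  refine ⟨mem_Kset_left G a b, ?_⟩
  rintro x (rfl | rfl | ⟨hxa, hxb⟩) hne
  · exact absurd rfl hne
  · rw [SimpleGraph.dist_self, adj_dist hab]
  · rw [SimpleGraph.dist_self, adj_dist hxa.symm]

lemma gate_corner (hqm : IsQuasiMedian G) {a b c : V} (hab : G.Adj a b) (hac : G.Adj a c)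
    (hnbc : ¬ G.Adj b c) (hbc : b ≠ c) : IsGate G (Kset G a b) a c := by
  refine ⟨mem_Kset_left G a b, ?_⟩
  have hca : G.dist c a = 1 := adj_dist hac.symm
  rintro x (rfl | rfl | ⟨hxa, hxb⟩) hne
  · exact absurd rfl hne
  · have h2 : G.dist c x = 2 :=
      dist_two hqm (fun h => hbc h.symm) (fun h => hnbc h.symm) hac.symm hab
    omega
  · have hnxc : ¬ G.Adj x c := fun h => hnbc (cn hqm hxa.symm hab hac hxb h hbc)
    have hxc : x ≠ c := fun h => hnbc ((h ▸ hxb).symm)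
    have h2 : G.dist c x = 2 :=
      dist_two hqm (fun h => hxc h.symm) (fun h => hnxc h.symm) hac.symm hxa.symm
    omega

lemma Kset_triangle_sub (hqm : IsQuasiMedian G) {a b c : V} (hab : G.Adj a b)
    (hac : G.Adj a c) (hbc : G.Adj b c) : Kset G a b ⊆ Kset G a c := by
  rintro x (rfl | rfl | ⟨hxa, hxb⟩)
  · exact mem_Kset_left G x c
  · exact adj_mem_Kset hab.symm hbc
  · by_cases hxc : x = c
    · exact hxc ▸ mem_Kset_right G a c
    · have hcK : c ∈ Kset G a b := adj_mem_Kset hac.symm hbc.symm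
      exact adj_mem_Kset hxa (Kset_adj hqm hab x (adj_mem_Kset hxa hxb) c hcK hxc)

lemma Kset_triangle (hqm : IsQuasiMedian G) {a b c : V} (hab : G.Adj a b)
    (hac : G.Adj a c) (hbc : G.Adj b c) : Kset G a b = Kset G a c :=
  (Kset_triangle_sub hqm hab hac hbc).antisymm (Kset_triangle_sub hqm hac hab hbc.symm)

/-- An induced square with edges `ab`, `bd`, `dc`, `ca`. -/
structure SqL (G : SimpleGraph V) (a b c d : V) : Prop where
  ab : G.Adj a b
  cd : G.Adj c d
  ac : G.Adj a c
  bd : G.Adj b d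
  nad : ¬ G.Adj a d
  nbc : ¬ G.Adj b c
  nead : a ≠ d
  nebc : b ≠ c

lemma SqL.flip1 {a b c d : V} (sq : SqL G a b c d) : SqL G b a d c :=
  ⟨sq.ab.symm, sq.cd.symm, sq.bd, sq.ac, sq.nbc, sq.nad, sq.nebc, sq.nead⟩

lemma SqL.flip2 {a b c d : V} (sq : SqL G a b c d) : SqL G c d a b :=
  ⟨sq.cd, sq.ab, sq.ac.symm, sq.bd.symm, fun h => sq.nbc h.symm, fun h => sq.nad h.symm,
    fun h => sq.nebc h.symm, fun h => sq.nead h.symm⟩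

lemma SqL.dist_ad (hqm : IsQuasiMedian G) {a b c d : V} (sq : SqL G a b c d) :
    G.dist a d = 2 :=
  dist_two hqm sq.nead sq.nad sq.ab sq.bd

lemma SqL.dist_bc (hqm : IsQuasiMedian G) {a b c d : V} (sq : SqL G a b c d) :
    G.dist b c = 2 :=
  dist_two hqm sq.nebc sq.nbc sq.ab.symm sq.ac

lemma SqL.common_cd_not_a (hqm : IsQuasiMedian G) {a b c d y : V} (sq : SqL G a b c d)
    (hyc : G.Adj y c) (hyd : G.Adj y d) : ¬ G.Adj y a := fun h =>
  sq.nad (cn hqm hyc.symm sq.ac.symm sq.cd h hyd sq.nead)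

lemma SqL.common_cd_not_b (hqm : IsQuasiMedian G) {a b c d y : V} (sq : SqL G a b c d)
    (hyc : G.Adj y c) (hyd : G.Adj y d) : ¬ G.Adj y b := fun h =>
  sq.nbc (cn hqm hyd.symm sq.bd.symm sq.cd.symm h hyc sq.nebc)

lemma SqL.third_not_c (hqm : IsQuasiMedian G) {a b c d x : V} (sq : SqL G a b c d)
    (hxa : G.Adj x a) (hxb : G.Adj x b) : ¬ G.Adj x c := fun h =>
  sq.nbc (cn hqm hxa.symm sq.ab sq.ac hxb h sq.nebc)

lemma SqL.third_not_d (hqm : IsQuasiMedian G) {a b c d x : V} (sq : SqL G a b c d)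
    (hxa : G.Adj x a) (hxb : G.Adj x b) : ¬ G.Adj x d := fun h =>
  sq.nad (cn hqm hxb.symm sq.ab.symm sq.bd hxa h sq.nead)

end QmProof

namespace QmProof

open SimpleGraph

variable {V : Type*} {G : SimpleGraph V}

/-- Transfer of gates across an induced square. -/
lemma gate_transfer (hqm : IsQuasiMedian G) {a b c d v : V} (sq : SqL G a b c d)
    (hg : IsGate G (Kset G a b) a v) : IsGate G (Kset G c d) c v := by
  obtain ⟨g₀, hgate⟩ := gate_exists hqm sq.cd v
  suffices hc : g₀ = c by rwa [hc] at hgate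
  set m := G.dist v a with hm
  have hvb : G.dist v b = m + 1 := hg.2 b (mem_Kset_right G a b) sq.ab.ne'
  have hthird : ∀ x, G.Adj x a → G.Adj x b → G.dist v x = m + 1 := fun x h1 h2 =>
    hg.2 x (adj_mem_Kset h1 h2) h1.ne
  have hvc_le : G.dist v c ≤ m + 1 := by
    have h1 := dtri hqm v a c
    rw [adj_dist sq.ac] at h1
    omega
  have hvd_ge : m ≤ G.dist v d := by
    have h1 := dtri hqm v d b
    rw [adj_dist sq.bd.symm] at h1
    omega
  by_contra hne
  rcases hgate.1 with hc | hd | ⟨hhc, hhd⟩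
  · exact hne hc
  · -- gate is d : diagonal pattern, two medians of (v, b, c)
    subst hd
    have hvc : G.dist v c = G.dist v g₀ + 1 := hgate.2 c (mem_Kset_left G c g₀) sq.cd.ne
    have ht : G.dist v g₀ = m := by omega
    have hab1 : G.dist a b = 1 := adj_dist sq.ab
    have hac1 : G.dist a c = 1 := adj_dist sq.ac
    have hba1 : G.dist b a = 1 := adj_dist sq.ab.symm
    have hdb1 : G.dist g₀ b = 1 := adj_dist sq.bd.symm
    have hdc1 : G.dist g₀ c = 1 := adj_dist sq.cd.symm
    have hbd1 : G.dist b g₀ = 1 := adj_dist sq.bd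
    have hbc2 : G.dist b c = 2 := sq.dist_bc hqm
    have had : a = g₀ := two_median hqm (r₁ := v) (r₂ := b) (r₃ := c) (p := a) (q := g₀)
      (by rw [hab1]; omega) (by rw [hac1]; omega) (by rw [hba1, hac1, hbc2])
      (by rw [hdb1]; omega) (by rw [hdc1]; omega) (by rw [hbd1, hdc1, hbc2])
    exact sq.nead had
  · -- gate is a common neighbour y of c, d
    have hnha := sq.common_cd_not_a hqm hhc hhd
    have hnhb := sq.common_cd_not_b hqm hhc hhd
    have hvc : G.dist v c = G.dist v g₀ + 1 := hgate.2 c (mem_Kset_left G c d) hhc.ne'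
    have hvd : G.dist v d = G.dist v g₀ + 1 := hgate.2 d (mem_Kset_right G c d) hhd.ne'
    set t := G.dist v g₀ with htdef
    have htle : t ≤ m := by omega
    rcases Nat.lt_or_ge t m with htlt | htge
    · -- t ≤ m - 1 : triangle-condition kill
      have hha : g₀ ≠ a := fun e => sq.nad (e ▸ hhd)
      have hda2 : G.dist g₀ a = 2 := dist_two hqm hha hnha hhc sq.ac.symm
      have hdb2 : G.dist g₀ b = 2 :=
        dist_two hqm (fun e => sq.nbc (e ▸ hhc)) hnhb hhd sq.bd.symm
      obtain ⟨w, hwa, hwb, hw⟩ := tc hqm sq.ab (by omega : G.dist g₀ a = G.dist g₀ b) hha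
      have hvw : G.dist v w = m + 1 := hthird w hwa hwb
      have hvw_le : G.dist v w ≤ t + 1 := by
        have h1 := dtri hqm v g₀ w
        have h2 : G.dist g₀ w = 1 := by omega
        omega
      omega
    · -- t = m : forced-quasi-median kill
      have htm : t = m := le_antisymm htle htge
      have hvd' : G.dist v d = m + 1 := by omega
      have hvc' : G.dist v c = m + 1 := by omega
      have hdad : G.dist a d = 2 := sq.dist_ad hqm
      obtain ⟨y₁, y₂, y₃, ⟨k, ⟨e1, e2, e3, d12, d13, d23⟩, -⟩, -⟩ := hqm.1 v a d
      rw [d12] at e1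
      rw [d13, hvd'] at e2
      rw [d23, hdad] at e3
      rw [← hm] at e1
      have hcomm : G.dist a y₂ = G.dist y₂ a := SimpleGraph.dist_comm
      have key : G.dist y₂ a = 0 ∧ k = 1 ∧ G.dist y₃ d = 1 ∧ G.dist v y₁ + 1 = m := by
        rw [hcomm] at e3
        omega
      obtain ⟨hp, hk, hq, hr⟩ := key
      have hy2 : y₂ = a := dist0 hqm hp
      rw [hy2, hk] at d23
      have haq : G.Adj a y₃ := dist_adj d23
      have hqd : G.Adj y₃ d := dist_adj hq
      have hvq_le : G.dist v y₃ ≤ m := by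
        have h1 := dtri hqm v y₁ y₃
        rw [d13, hk] at h1
        omega
      have hvq_ge : m ≤ G.dist v y₃ := by
        have h1 := dtri hqm v y₃ d
        rw [adj_dist hqd] at h1
        omega
      have hnqb : ¬ G.Adj y₃ b := fun h => by
        have := hthird y₃ haq.symm h
        omega
      have hnqc : ¬ G.Adj y₃ c := by
        intro h
        have hne3 : y₃ ≠ g₀ := fun e => hnha (e ▸ haq.symm)
        have := hgate.2 y₃ (adj_mem_Kset h hqd) hne3
        omega
      have hqb : y₃ ≠ b := fun e => by rw [e] at hvq_le hvq_ge; omega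
      have hqc : y₃ ≠ c := fun e => by rw [e] at hvq_le hvq_ge; omega
      have hdqb : G.dist y₃ b = 2 := dist_two hqm hqb hnqb haq.symm sq.ab
      have hdqc : G.dist y₃ c = 2 := dist_two hqm hqc hnqc hqd sq.cd.symm
      have hbc2 : G.dist b c = 2 := sq.dist_bc hqm
      have had : a = d := two_median hqm (r₁ := y₃) (r₂ := b) (r₃ := c) (p := a) (q := d)
        (by rw [adj_dist haq.symm, adj_dist sq.ab, hdqb])
        (by rw [adj_dist haq.symm, adj_dist sq.ac, hdqc])
        (by rw [adj_dist sq.ab.symm, adj_dist sq.ac, hbc2])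
        (by rw [adj_dist hqd, adj_dist sq.bd.symm, hdqb])
        (by rw [adj_dist hqd, adj_dist sq.cd.symm, hdqc])
        (by rw [adj_dist sq.bd, adj_dist sq.cd.symm, hbc2])
      exact sq.nead had

end QmProof

namespace QmProof

open SimpleGraph

variable {V : Type*} {G : SimpleGraph V}

/-- Two vertices have the same gate in `K`. -/
def GateRel (G : SimpleGraph V) (K : Set V) (u w : V) : Prop :=
  ∃ g, IsGate G K g u ∧ IsGate G K g w

lemma gateRel_square_mp (hqm : IsQuasiMedian G) {a b c d : V} (sq : SqL G a b c d)
    (u w : V) (h : GateRel G (Kset G a b) u w) : GateRel G (Kset G c d) u w := by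
  obtain ⟨g, hu, hw⟩ := h
  rcases hu.1 with rfl | rfl | ⟨hga, hgb⟩
  · exact ⟨c, gate_transfer hqm sq hu, gate_transfer hqm sq hw⟩
  · have hcomm : Kset G a g = Kset G g a := Kset_comm G a g
    rw [hcomm] at hu hw
    have hu' := gate_transfer hqm sq.flip1 hu
    have hw' := gate_transfer hqm sq.flip1 hw
    rw [Kset_comm G d c] at hu' hw'
    exact ⟨d, hu', hw'⟩
  · have hnxc := sq.third_not_c hqm hga hgb
    have hnxd := sq.third_not_d hqm hga hgb
    have hxc : g ≠ c := fun e => sq.nbc ((e ▸ hgb).symm)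
    have hxd : g ≠ d := fun e => sq.nad ((e ▸ hga).symm)
    have h2c : G.dist g c = 2 := dist_two hqm hxc hnxc hga sq.ac
    have h2d : G.dist g d = 2 := dist_two hqm hxd hnxd hgb sq.bd
    obtain ⟨y, hyc, hyd, hy1⟩ := tc hqm sq.cd (by omega) hxc
    have hgy : G.Adj g y := dist_adj (by omega)
    have sq' : SqL G g a y c :=
      ⟨hga, hyc, hgy, sq.ac, hnxc, fun e => (sq.common_cd_not_a hqm hyc hyd) e.symm,
        hxc, fun e => sq.nad (e ▸ hyd)⟩
    have hKA : Kset G a b = Kset G g a := by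
      rw [Kset_comm G g a]
      exact Kset_triangle hqm sq.ab hga.symm hgb.symm
    have hKC : Kset G c d = Kset G y c := by
      rw [Kset_comm G y c]
      exact Kset_triangle hqm sq.cd hyc.symm hyd.symm
    rw [hKA] at hu hw
    rw [hKC]
    exact ⟨y, gate_transfer hqm sq' hu, gate_transfer hqm sq' hw⟩

lemma gateRel_square (hqm : IsQuasiMedian G) {a b c d : V} (sq : SqL G a b c d) :
    GateRel G (Kset G a b) = GateRel G (Kset G c d) := by
  funext u w
  exact propext ⟨gateRel_square_mp hqm sq u w, gateRel_square_mp hqm sq.flip2 u w⟩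

/-- The maximal clique of an unordered pair. -/
def KsetS (G : SimpleGraph V) : Sym2 V → Set V :=
  Sym2.lift ⟨fun a b => Kset G a b, fun a b => Kset_comm G a b⟩

lemma KsetS_mk (a b : V) : KsetS G s(a, b) = Kset G a b := rfl

/-- The parallelism invariant of an edge: the "same gate in the maximal clique"
relation. -/
def EInv (G : SimpleGraph V) (e : Sym2 V) : V → V → Prop := GateRel G (KsetS G e)

lemma parallel_inv (hqm : IsQuasiMedian G) {e f : Sym2 V}
    (h : Parallel G Set.univ e f) : e = f ∨ EInv G e = EInv G f := by
  induction h with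
  | rel e f hr =>
    right
    rcases hr with ⟨a, b, c, -, -, -, he, hf, hab, hac, hbc⟩ |
      ⟨a, b, c, d, -, -, -, -, he, hf, hab, hcd, hac2, hbd, hnad, hnbc, hne1, hne2⟩
    · subst he; subst hf
      show GateRel G (KsetS G s(a, b)) = GateRel G (KsetS G s(a, c))
      rw [KsetS_mk, KsetS_mk, Kset_triangle hqm hab hac hbc]
    · subst he; subst hf
      show GateRel G (KsetS G s(a, b)) = GateRel G (KsetS G s(c, d))
      rw [KsetS_mk, KsetS_mk]
      exact gateRel_square hqm ⟨hab, hcd, hac2, hbd, hnad, hnbc, hne1, hne2⟩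
  | refl e => exact Or.inl rfl
  | symm e f _ ih =>
    rcases ih with rfl | hih
    · exact Or.inl rfl
    · exact Or.inr hih.symm
  | trans e f g _ _ ih1 ih2 =>
    rcases ih1 with rfl | h1
    · exact ih2
    · rcases ih2 with rfl | h2
      · exact Or.inr h1
      · exact Or.inr (h1.trans h2)

/-- Two edges meeting at the corner of an induced square are not parallel:
hyperplanes of a quasi-median graph do not self-cross. -/
lemma not_parallel_corner (hqm : IsQuasiMedian G) {a b c : V} (hab : G.Adj a b)
    (hac : G.Adj a c) (hnbc : ¬ G.Adj b c) (hbc : b ≠ c) :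
    ¬ Parallel G Set.univ s(a, b) s(a, c) := by
  intro h
  rcases parallel_inv hqm h with he | he
  · rw [Sym2.eq_iff] at he
    rcases he with ⟨-, h1⟩ | ⟨h1, -⟩
    · exact hbc h1
    · exact hac.ne h1
  · have h1 : EInv G s(a, b) a c := ⟨a, gate_self hab, gate_corner hqm hab hac hnbc hbc⟩
    rw [he] at h1
    obtain ⟨g, hga, hgc⟩ := h1
    have hcc : IsGate G (Kset G a c) c c := by
      rw [Kset_comm G a c]
      exact gate_self hac.symm
    have e1 : g = a := hga.unique (gate_self hac)
    have e2 : g = c := hgc.unique hcc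
    exact hac.ne (e1 ▸ e2)

end QmProof

namespace QmProof

open SimpleGraph

variable {V : Type*} {G : SimpleGraph V}

open Classical in
lemma prism_step (hqm : IsQuasiMedian G) {k : ℕ} {S : Fin k → Set V}
    {φ : (∀ i, S i) → V}
    (hadj : ∀ f g : ∀ i, S i, f ≠ g →
      (G.Adj (φ f) (φ g) ↔ ∃! i : Fin k, (f i : V) ≠ (g i : V))) :
    ∀ (n : ℕ) (f g : ∀ i, S i),
      (Finset.univ.filter fun i => (f i : V) ≠ (g i : V)).card = n →
      G.dist (φ f) (φ g) ≤ n := by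
  classical
  intro n
  induction n with
  | zero =>
    intro f g hc
    have hfg : f = g := by
      funext i
      by_contra hne
      have hi : i ∈ Finset.univ.filter fun i => (f i : V) ≠ (g i : V) :=
        Finset.mem_filter.mpr ⟨Finset.mem_univ i, fun h => hne (Subtype.ext h)⟩
      rw [Finset.card_eq_zero] at hc
      rw [hc] at hi
      exact absurd hi (Finset.notMem_empty i)
    rw [hfg, SimpleGraph.dist_self]
  | succ n ih =>
    intro f g hc
    obtain ⟨i, hi⟩ := Finset.card_pos.mp (by omega :
      0 < (Finset.univ.filter fun i => (f i : V) ≠ (g i : V)).card)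
    have hfi : (f i : V) ≠ (g i : V) := (Finset.mem_filter.mp hi).2
    set g' : ∀ j, S j := Function.update g i (f i) with hg'
    have hval : ∀ j, (g' j : V) = if h : j = i then (f i : V) else (g j : V) := by
      intro j
      by_cases hj : j = i
      · subst hj; rw [hg']; rw [Function.update_self]; simp
      · rw [hg', Function.update_of_ne hj]; simp [hj]
    have hfilter : (Finset.univ.filter fun j => (f j : V) ≠ (g' j : V)) =
        (Finset.univ.filter fun j => (f j : V) ≠ (g j : V)).erase i := by
      ext j
      simp only [Finset.mem_filter, Finset.mem_erase, Finset.mem_univ, true_and]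
      constructor
      · intro hj
        by_cases hji : j = i
        · exfalso; rw [hval j, dif_pos hji] at hj; subst hji; exact hj rfl
        · rw [hval j, dif_neg hji] at hj; exact ⟨hji, hj⟩
      · rintro ⟨hji, hj⟩
        rw [hval j, dif_neg hji]
        exact hj
    have hcard : (Finset.univ.filter fun j => (f j : V) ≠ (g' j : V)).card = n := by
      rw [hfilter, Finset.card_erase_of_mem hi, hc]
      omega
    have hstep : G.dist (φ g') (φ g) = 1 := by
      have hne : g' ≠ g := by
        intro h
        have := congrFun h i
        rw [hg'] at this
        rw [Function.update_self] at this
        exact hfi (congrArg Subtype.val this)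
      refine adj_dist ((hadj g' g hne).mpr ⟨i, ?_, ?_⟩)
      · show (g' i : V) ≠ (g i : V)
        rw [hval i, dif_pos rfl]; exact hfi
      · intro j hj
        have hj' : (g' j : V) ≠ (g j : V) := hj
        by_contra hji
        rw [hval j, dif_neg hji] at hj'
        exact hj' rfl
    have htri := dtri hqm (φ f) (φ g') (φ g)
    have := ih f g' hcard
    omega

end QmProof

open QmProof


/-- If the crossing graph of a quasi-median graph admits a graph factor system, then
there is a uniform bound on collections of pairwise-crossing hyperplanes, and
consequently every prism has uniformly bounded diameter. -/
theorem bounded_cliques_and_prisms_of_factor_system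
    (G : SimpleGraph V) (hqm : IsQuasiMedian G)
    (𝔉 : Set (Set (Hyp G)))
    (h𝔉 : IsGraphFactorSystem (crossingGraph G) Set.univ 𝔉) :
    ∃ n : ℕ,
      (∀ s : Finset (Hyp G),
        (s : Set (Hyp G)).Pairwise (crossingGraph G).Adj → s.card ≤ n) ∧
      (∀ P : Set V, IsPrism G P → ∀ x ∈ P, ∀ y ∈ P, G.dist x y ≤ n) := by
  classical
  obtain ⟨hXF, hsub, hlink, hinter, n, hn, hchain⟩ := h𝔉
  have part1 : ∀ s : Finset (Hyp G),
      (s : Set (Hyp G)).Pairwise (crossingGraph G).Adj → s.card ≤ n := by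
    intro s hs
    by_contra hcon
    push_neg at hcon
    obtain ⟨t, hts, htc⟩ := Finset.exists_subset_card_eq (by omega : n + 1 ≤ s.card)
    have hts' : (t : Set (Hyp G)).Pairwise (crossingGraph G).Adj :=
      hs.mono (Finset.coe_subset.mpr hts)
    set g : Fin (n + 1) → Hyp G :=
      fun i => (t.equivFin.symm (Fin.cast htc.symm i) : Hyp G) with hgdef
    have hgmem : ∀ i, g i ∈ t := fun i => (t.equivFin.symm (Fin.cast htc.symm i)).2
    have hginj : Function.Injective g := by
      intro i j hij
      have h1 : t.equivFin.symm (Fin.cast htc.symm i) = t.equivFin.symm (Fin.cast htc.symm j) :=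
        Subtype.ext hij
      have h2 := t.equivFin.symm.injective h1
      have h3 : (i : ℕ) = (j : ℕ) := by
        have := congrArg Fin.val h2
        simpa using this
      exact Fin.ext h3
    have hadjg : ∀ i j, i ≠ j → (crossingGraph G).Adj (g i) (g j) := fun i j hij =>
      hts' (hgmem i) (hgmem j) (hginj.ne hij)
    set gg : ℕ → Hyp G := fun m => g ⟨m % (n + 1), Nat.mod_lt _ (Nat.succ_pos n)⟩ with hggdef
    have hggadj : ∀ m1 m2, m1 < n + 1 → m2 < n + 1 → m1 ≠ m2 →
        (crossingGraph G).Adj (gg m1) (gg m2) := by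
      intro m1 m2 h1 h2 hne
      refine hadjg _ _ ?_
      intro h
      have h' := congrArg Fin.val h
      simp only [Nat.mod_eq_of_lt h1, Nat.mod_eq_of_lt h2] at h'
      exact hne h'
    set lk : Hyp G → Set (Hyp G) :=
      fun K => {u ∈ (Set.univ : Set (Hyp G)) | (crossingGraph G).Adj K u} with hlkdef
    have hmemlk : ∀ K u, u ∈ lk K ↔ (crossingGraph G).Adj K u := by
      intro K u
      constructor
      · intro h; exact h.2
      · intro h; exact ⟨trivial, h⟩
    have hlkF : ∀ (K u : Hyp G), (crossingGraph G).Adj K u → lk K ∈ 𝔉 := fun K u h =>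
      hlink K trivial ⟨u, (hmemlk K u).mpr h⟩
    set I : ℕ → Set (Hyp G) :=
      fun m => Nat.rec (lk (gg 0)) (fun m' Im => Im ∩ lk (gg (m' + 1))) m with hIdef
    have hchar : ∀ m u, u ∈ I m ↔ ∀ j ≤ m, (crossingGraph G).Adj (gg j) u := by
      intro m
      induction m with
      | zero =>
        intro u
        rw [show I 0 = lk (gg 0) from rfl, hmemlk]
        constructor
        · intro h j hj
          have hj0 : j = 0 := by omega
          rw [hj0]; exact h
        · intro h; exact h 0 le_rfl
      | succ m ihm =>
        intro u
        rw [show I (m + 1) = I m ∩ lk (gg (m + 1)) from rfl]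
        constructor
        · rintro ⟨h1, h2⟩ j hj
          rcases Nat.lt_or_ge j (m + 1) with h | h
          · exact (ihm u).mp h1 j (by omega)
          · have hj1 : j = m + 1 := by omega
            rw [hj1]; exact (hmemlk _ _).mp h2
        · intro h
          exact ⟨(ihm u).mpr (fun j hj => h j (by omega)),
            (hmemlk _ _).mpr (h (m + 1) le_rfl)⟩
    have hmono : ∀ m m', m ≤ m' → I m' ⊆ I m := by
      intro m m' hmm u hu
      rw [hchar] at hu ⊢
      exact fun j hj => hu j (le_trans hj hmm)
    have hwit : ∀ m, m + 1 ≤ n → gg (m + 1) ∈ I m := by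
      intro m hm
      rw [hchar]
      intro j hj
      exact hggadj j (m + 1) (by omega) (by omega) (by omega)
    have hmemF : ∀ m, m + 1 ≤ n → I m ∈ 𝔉 := by
      intro m
      induction m with
      | zero =>
        intro hm
        exact hlkF (gg 0) (gg 1) (hggadj 0 1 (by omega) (by omega) (by omega))
      | succ m ihm =>
        intro hm
        have h1 : I m ∈ 𝔉 := ihm (by omega)
        have h2 : lk (gg (m + 1)) ∈ 𝔉 :=
          hlkF (gg (m + 1)) (gg (m + 2)) (hggadj (m + 1) (m + 2) (by omega) (by omega) (by omega))
        exact hinter (I m) h1 (lk (gg (m + 1))) h2 ⟨gg (m + 2), hwit (m + 1) hm⟩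
    set c : Fin n → Set (Hyp G) := fun i => I (n - 1 - (i : ℕ)) with hcdef
    have hcF : ∀ i, c i ∈ 𝔉 := by
      intro i
      refine hmemF _ ?_
      have := i.isLt
      omega
    have hcSM : StrictMono c := by
      intro i j hij
      have hii := i.isLt
      have hjj := j.isLt
      have hij' : (i : ℕ) < (j : ℕ) := hij
      have hle : c i ≤ c j := hmono (n - 1 - (j : ℕ)) (n - 1 - (i : ℕ)) (by omega)
      refine lt_of_le_of_ne hle ?_
      intro heq
      have hwin : gg (n - 1 - (j : ℕ) + 1) ∈ I (n - 1 - (j : ℕ)) := hwit _ (by omega)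
      have hwin' : gg (n - 1 - (j : ℕ) + 1) ∈ I (n - 1 - (i : ℕ)) := by
        have : c j = c i := heq.symm
        have hci : gg (n - 1 - (j : ℕ) + 1) ∈ c j := hwin
        rw [this] at hci
        exact hci
      rw [hchar] at hwin'
      exact (crossingGraph G).loopless.irrefl _ (hwin' (n - 1 - (j : ℕ) + 1) (by omega))
    exact absurd (hchain n c hcSM hcF) (lt_irrefl n)
  refine ⟨n, part1, ?_⟩
  intro P hP x hx y hy
  obtain ⟨k, S, φ, hcl, hmax, hinj, hrange, hadj⟩ := hP
  rw [← hrange] at hx hy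
  obtain ⟨fx, rfl⟩ := hx
  obtain ⟨fy, rfl⟩ := hy
  -- coordinate values of updates
  have hup : ∀ (f : ∀ i, S i) (i : Fin k) (v : S i) (j : Fin k),
      ((Function.update f i v) j : V) = if j = i then (v : V) else (f j : V) := by
    intro f i v j
    by_cases hj : j = i
    · subst hj; rw [Function.update_self, if_pos rfl]
    · rw [Function.update_of_ne hj, if_neg hj]
  -- adjacency from a unique coordinate difference
  have hdiff_adj : ∀ (f g : ∀ i, S i) (i : Fin k), ((f i : V) ≠ (g i : V)) →
      (∀ j, j ≠ i → (f j : V) = (g j : V)) → G.Adj (φ f) (φ g) := by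
    intro f g i hi hothers
    have hne : f ≠ g := fun h => hi (congrArg Subtype.val (congrFun h i))
    refine (hadj f g hne).mpr ⟨i, hi, ?_⟩
    intro j hj
    by_contra hji
    exact hj (hothers j hji)
  -- non-adjacency from two coordinate differences
  have hdiff_nadj : ∀ (f g : ∀ i, S i) (i j : Fin k), i ≠ j →
      ((f i : V) ≠ (g i : V)) → ((f j : V) ≠ (g j : V)) → ¬ G.Adj (φ f) (φ g) := by
    intro f g i j hij hi hj hA
    have hne : f ≠ g := fun h => hi (congrArg Subtype.val (congrFun h i))
    obtain ⟨l, -, hl⟩ := (hadj f g hne).mp hA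
    exact hij ((hl i hi).trans (hl j hj).symm)
  set D : Finset (Fin k) :=
    Finset.univ.filter (fun i => (fx i : V) ≠ (fy i : V)) with hD
  -- the four relevant corner adjacency facts
  have hA1 : ∀ i : Fin k, (fx i : V) ≠ (fy i : V) →
      G.Adj (φ fx) (φ (Function.update fx i (fy i))) := by
    intro i hi
    refine hdiff_adj fx _ i ?_ ?_
    · rw [hup fx i (fy i) i, if_pos rfl]; exact hi
    · intro j hj; rw [hup fx i (fy i) j, if_neg hj]
  have hA2 : ∀ i j : Fin k, i ≠ j → (fy j : V) ≠ (fx j : V) →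
      G.Adj (φ (Function.update fx i (fy i)))
        (φ (Function.update (Function.update fx i (fy i)) j (fy j))) := by
    intro i j hij hj
    refine hdiff_adj _ _ j ?_ ?_
    · rw [hup (Function.update fx i (fy i)) j (fy j) j, if_pos rfl,
        hup fx i (fy i) j, if_neg (fun h => hij h.symm)]
      exact fun h => hj h.symm
    · intro l hl
      rw [hup (Function.update fx i (fy i)) j (fy j) l, if_neg hl]
  have hA3 : ∀ i j : Fin k, i ≠ j → (fx i : V) ≠ (fy i : V) →
      G.Adj (φ (Function.update fx j (fy j)))
        (φ (Function.update (Function.update fx i (fy i)) j (fy j))) := by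
    intro i j hij hi
    refine hdiff_adj _ _ i ?_ ?_
    · rw [hup fx j (fy j) i, if_neg hij,
        hup (Function.update fx i (fy i)) j (fy j) i, if_neg hij,
        hup fx i (fy i) i, if_pos rfl]
      exact hi
    · intro l hl
      rw [hup fx j (fy j) l, hup (Function.update fx i (fy i)) j (fy j) l]
      by_cases hlj : l = j
      · rw [if_pos hlj, if_pos hlj]
      · rw [if_neg hlj, if_neg hlj, hup fx i (fy i) l, if_neg hl]
  have hN1 : ∀ i j : Fin k, i ≠ j → (fx i : V) ≠ (fy i : V) → (fx j : V) ≠ (fy j : V) →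
      ¬ G.Adj (φ fx) (φ (Function.update (Function.update fx i (fy i)) j (fy j))) := by
    intro i j hij hi hj
    refine hdiff_nadj _ _ i j hij ?_ ?_
    · rw [hup (Function.update fx i (fy i)) j (fy j) i, if_neg hij,
        hup fx i (fy i) i, if_pos rfl]
      exact hi
    · rw [hup (Function.update fx i (fy i)) j (fy j) j, if_pos rfl]
      exact hj
  have hN2 : ∀ i j : Fin k, i ≠ j → (fx i : V) ≠ (fy i : V) → (fx j : V) ≠ (fy j : V) →
      ¬ G.Adj (φ (Function.update fx i (fy i))) (φ (Function.update fx j (fy j))) := by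
    intro i j hij hi hj
    refine hdiff_nadj _ _ i j hij ?_ ?_
    · rw [hup fx i (fy i) i, if_pos rfl, hup fx j (fy j) i, if_neg hij]
      exact fun h => hi h.symm
    · rw [hup fx i (fy i) j, if_neg (fun h => hij h.symm), hup fx j (fy j) j, if_pos rfl]
      exact hj
  have hneφ : ∀ i j : Fin k, i ≠ j → (fx i : V) ≠ (fy i : V) →
      φ (Function.update fx i (fy i)) ≠ φ (Function.update fx j (fy j)) := by
    intro i j hij hi h
    have h1 := congrArg Subtype.val (congrFun (hinj h) i)
    rw [show ((Function.update fx i (fy i)) i : V) = (fy i : V) by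
        rw [hup fx i (fy i) i, if_pos rfl],
      show ((Function.update fx j (fy j)) i : V) = (fx i : V) by
        rw [hup fx j (fy j) i, if_neg hij]] at h1
    exact hi h1.symm
  -- the square corner between coordinates i and j
  have hcorner : ∀ i j : Fin k, i ≠ j → (fx i : V) ≠ (fy i : V) → (fx j : V) ≠ (fy j : V) →
      SquareCorner G Set.univ (s(φ fx, φ (Function.update fx i (fy i))))
        (s(φ fx, φ (Function.update fx j (fy j)))) := by
    intro i j hij hi hj
    exact ⟨φ fx, φ (Function.update fx i (fy i)), φ (Function.update fx j (fy j)),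
      φ (Function.update (Function.update fx i (fy i)) j (fy j)),
      trivial, trivial, trivial, trivial, rfl, rfl,
      hA1 i hi, hA1 j hj, hA2 i j hij (fun h => hj h.symm), hA3 i j hij hi,
      hN1 i j hij hi hj, hN2 i j hij hi hj⟩
  -- hyperplanes of the coordinates
  set emap : {i // i ∈ D} → Hyp G := fun i =>
    Quotient.mk (parallelSetoid G)
      ⟨s(φ fx, φ (Function.update fx i.1 (fy i.1))),
        (SimpleGraph.mem_edgeSet G).mpr (hA1 i.1 (Finset.mem_filter.mp i.2).2)⟩ with hemap
  have hKne : ∀ i j : {i // i ∈ D}, i.1 ≠ j.1 → emap i ≠ emap j := by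
    intro i j hij h
    have hi := (Finset.mem_filter.mp i.2).2
    have hj := (Finset.mem_filter.mp j.2).2
    have hpar : Parallel G Set.univ (s(φ fx, φ (Function.update fx i.1 (fy i.1))))
        (s(φ fx, φ (Function.update fx j.1 (fy j.1)))) := Quotient.exact h
    exact not_parallel_corner hqm (hA1 i.1 hi) (hA1 j.1 hj)
      (hN2 i.1 j.1 hij hi hj) (hneφ i.1 j.1 hij hi) hpar
  have hKinj : Function.Injective emap := by
    intro i j h
    by_contra hnij
    exact hKne i j (fun e => hnij (Subtype.ext e)) h
  have hTpair : ((D.attach.image emap : Finset (Hyp G)) : Set (Hyp G)).Pairwise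
      (crossingGraph G).Adj := by
    intro K hK K' hK' hne
    simp only [Finset.coe_image, Set.mem_image, Finset.mem_coe] at hK hK'
    obtain ⟨i, -, rfl⟩ := hK
    obtain ⟨j, -, rfl⟩ := hK'
    have hij : i.1 ≠ j.1 := by
      intro e
      exact hne (congrArg emap (Subtype.ext e))
    have hi := (Finset.mem_filter.mp i.2).2
    have hj := (Finset.mem_filter.mp j.2).2
    exact ⟨hne, _, _, rfl, rfl, hcorner i.1 j.1 hij hi hj⟩
  have hcard : D.card ≤ n := by
    have h1 := part1 (D.attach.image emap) hTpair
    have h2 : (D.attach.image emap).card = D.card := by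
      rw [Finset.card_image_of_injective _ hKinj, Finset.card_attach]
    omega
  have hdist := prism_step hqm hadj D.card fx fy (by rw [hD])
  omega
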